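/- For s > 0 fixed and power-law weights w_i = (n−i+1)^s / f(n,s) with f(n,s) = ∑_{j=1}^n j^s, the quantity E[T] = ∑_{r=2}^n f(n,s)/((n−r+1)^s + ... + n^s) satisfies E[T] = n ln n/(s+1) + O(n) as n → ∞. -/

import Mathlib

open Finset Real

section PLTaux

lemma bern {a z : ℝ} (ha : 1 ≤ a) (hz : -1 ≤ z) : 1 + a*z ≤ (1+z)^a :=
  one_add_mul_self_le_rpow_one_add hz ha

lemma natpow_bound {x : ℝ} (N : ℕ) (hx0 : 0 ≤ x) (hx1 : x ≤ 1) :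
    (1+x)^N ≤ 1 + ((2:ℝ)^N - 1)*x := by
  induction N with
  | zero => simp
  | succ N ih =>
    have h2 : (1:ℝ) ≤ 2^N := one_le_pow₀ (by norm_num)
    calc (1+x)^(N+1) = (1+x)^N * (1+x) := pow_succ _ _
      _ ≤ (1 + ((2:ℝ)^N - 1)*x) * (1+x) := by
          apply mul_le_mul_of_nonneg_right ih (by linarith)
      _ ≤ 1 + ((2:ℝ)^(N+1) - 1)*x := by
          have : ((2:ℝ)^N - 1)*x*x ≤ ((2:ℝ)^N - 1)*x := by
            apply mul_le_of_le_one_right (mul_nonneg (by linarith) hx0) hx1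
          ring_nf
          nlinarith [pow_nonneg (by norm_num : (0:ℝ) ≤ 2) N]

lemma rpow_le_natpow {x : ℝ} (hx : 1 ≤ x) {a : ℝ} {N : ℕ} (h : a ≤ N) :
    x ^ a ≤ x ^ N := by
  rw [← Real.rpow_natCast x N]
  exact Real.rpow_le_rpow_of_exponent_le hx h

lemma Hsum_le_log (n : ℕ) (hn : 1 ≤ n) : ∑ r ∈ Icc 2 n, (1/(r:ℝ)) ≤ Real.log n := by
  induction n with
  | zero => omega
  | succ n ih =>
    rcases Nat.eq_or_lt_of_le hn with h1 | h1
    · simp [← h1]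
    · have hn1 : 1 ≤ n := by omega
      have hnp : (0:ℝ) < n := by positivity
      rw [Finset.sum_Icc_succ_top (by omega)]
      have key : (1:ℝ)/(n+1) ≤ Real.log (n+1) - Real.log n := by
        have := Real.log_le_sub_one_of_pos (x := (n:ℝ)/(n+1)) (by positivity)
        rw [Real.log_div (by positivity) (by positivity)] at this
        have : Real.log n - Real.log (n+1) ≤ -(1/(n+1)) := by
          have h' : (n:ℝ)/(n+1) - 1 = -(1/(n+1)) := by field_simp; ring
          linarith [this, h'.symm ▸ this]
        linarith
      have := ih hn1
      push_cast
      push_cast at this key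
      linarith

lemma log_ratio (m : ℕ) : Real.log ((m:ℝ)+2) - Real.log ((m:ℝ)+1) ≤ 1/((m:ℝ)+1) := by
  have h0 : (0:ℝ) < (m:ℝ)+1 := by positivity
  have := Real.log_le_sub_one_of_pos (x := ((m:ℝ)+2)/((m:ℝ)+1)) (by positivity)
  rw [Real.log_div (by positivity) (by positivity)] at this
  have h' : ((m:ℝ)+2)/((m:ℝ)+1) - 1 = 1/((m:ℝ)+1) := by field_simp; ring
  linarith [h'.symm ▸ this]

lemma log_le_Hsum (n : ℕ) (hn : 1 ≤ n) : Real.log n - 1 ≤ ∑ r ∈ Icc 2 n, (1/(r:ℝ)) := by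
  have key : ∀ m : ℕ, 1 ≤ m → Real.log ((m:ℝ)+1) - 1 ≤ ∑ r ∈ Icc 2 m, (1/(r:ℝ)) := by
    intro m hm
    induction m with
    | zero => omega
    | succ m ih =>
      rcases Nat.eq_or_lt_of_le hm with h1 | h1
      · have hm0 : m = 0 := by omega
        subst hm0
        have hlog2 : Real.log ((0:ℕ)+1+1) ≤ 1 := by
          push_cast
          calc Real.log (0+1+1) ≤ 0+1+1-1 := Real.log_le_sub_one_of_pos (by norm_num)
            _ = 1 := by norm_num
        simp only [show Icc 2 1 = (∅ : Finset ℕ) by rfl, Finset.sum_empty]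
        push_cast at hlog2 ⊢
        norm_num at hlog2 ⊢
        linarith
      · have hm1 : 1 ≤ m := by omega
        have ih' := ih hm1
        rw [Finset.sum_Icc_succ_top (by omega)]
        have hr := log_ratio m
        push_cast at ih' ⊢
        rw [show ((m:ℝ)+1+1) = (m:ℝ)+2 from by ring]
        linarith
  have h2 := key n hn
  have : Real.log n ≤ Real.log ((n:ℝ)+1) := by
    apply Real.log_le_log (by positivity); linarith
  linarith


noncomputable def Q (s : ℝ) (m k : ℕ) : ℝ := ∑ j ∈ Icc (m+1) k, (j:ℝ)^s

lemma xs_mul {x s : ℝ} (hx : 0 < x) : (1/x) * x^(s+1) = x^s := by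
  rw [Real.rpow_add hx, Real.rpow_one]
  field_simp

lemma step_ub {s : ℝ} (hs : 0 < s) (k : ℕ) :
    ((k:ℝ)+1)^(s+1) - (k:ℝ)^(s+1) ≤ (s+1) * ((k:ℝ)+1)^s := by
  set x : ℝ := (k:ℝ)+1 with hx
  have hx0 : (0:ℝ) < x := by positivity
  have hx1 : (1:ℝ) ≤ x := by
    have := Nat.cast_nonneg (α := ℝ) k
    rw [hx]; linarith
  have hk0 : (0:ℝ) ≤ (k:ℝ) := Nat.cast_nonneg k
  have hb := bern (a := s+1) (z := -(1/x)) (by linarith) (by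
    have h1 : 1/x ≤ 1 := by rw [div_le_one hx0]; linarith
    linarith)
  have he : (1 + -(1/x)) = (k:ℝ)/x := by
    rw [hx]; field_simp; ring
  rw [he, Real.div_rpow hk0 (le_of_lt hx0)] at hb
  have hxpow : (0:ℝ) < x^(s+1) := Real.rpow_pos_of_pos hx0 _
  have h2 := (le_div_iff₀ hxpow).1 hb
  have e := xs_mul (s := s) hx0
  nlinarith [h2, e]

lemma step_lb {s : ℝ} (hs : 0 < s) (k : ℕ) :
    (s+1) * ((k:ℝ)+1)^s ≤ ((k:ℝ)+2)^(s+1) - ((k:ℝ)+1)^(s+1) := by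
  set x : ℝ := (k:ℝ)+1 with hx
  have hx0 : (0:ℝ) < x := by positivity
  have hb := bern (a := s+1) (z := 1/x) (by linarith)
    (le_trans (by norm_num) (by positivity : (0:ℝ) ≤ 1/x))
  have he : (1 + 1/x) = (x+1)/x := by field_simp
  rw [he, Real.div_rpow (by linarith) (le_of_lt hx0)] at hb
  have hxpow : (0:ℝ) < x^(s+1) := Real.rpow_pos_of_pos hx0 _
  have h2 := (le_div_iff₀ hxpow).1 hb
  have e := xs_mul (s := s) hx0
  have hx2 : ((k:ℝ)+2) = x + 1 := by rw [hx]; ring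
  rw [hx2]
  nlinarith [h2, e]

-- convexity tangent at y for f = y^(s+1), compared at 1
lemma tangent {s : ℝ} (hs : 0 < s) {y : ℝ} (h0 : 0 < y) (h1 : y ≤ 1) :
    (s+1) * y^s * (1-y) ≤ 1 - y^(s+1) := by
  have hb := bern (a := s+1) (z := (1-y)/y) (by linarith)
    (le_trans (by norm_num) (div_nonneg (by linarith) h0.le))
  have he : (1 + (1-y)/y) = 1/y := by field_simp; ring
  rw [he, Real.div_rpow zero_le_one (le_of_lt h0), Real.one_rpow] at hb
  have hxpow : (0:ℝ) < y^(s+1) := Real.rpow_pos_of_pos h0 _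
  have h2 := (le_div_iff₀ hxpow).1 hb
  have e := xs_mul (s := s) h0
  have h3 : (1 + (s+1)*((1-y)/y)) * y^(s+1)
      = y^(s+1) + (s+1)*(1-y)*((1/y)*y^(s+1)) := by ring
  rw [h3, e] at h2
  nlinarith

lemma bern_le {s : ℝ} (hs : 0 < s) {y : ℝ} (h0 : 0 ≤ y) (h1 : y ≤ 1) :
    1 - y^(s+1) ≤ (s+1)*(1-y) := by
  have hb := bern (a := s+1) (z := y - 1) (by linarith) (by linarith)
  have he : (1 + (y-1)) = y := by ring
  rw [he] at hb
  nlinarith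

-- sum comparison lemmas
lemma QA {s : ℝ} (hs : 0 < s) (m : ℕ) : ∀ k, m ≤ k →
    (k:ℝ)^(s+1) - (m:ℝ)^(s+1) ≤ (s+1) * Q s m k := by
  intro k hk
  induction k, hk using Nat.le_induction with
  | base => simp [Q]
  | succ k hk ih =>
    have hQ : Q s m (k+1) = Q s m k + ((k:ℝ)+1)^s := by
      rw [Q, Q, Finset.sum_Icc_succ_top (by omega)]
      push_cast; ring
    have := step_ub hs k
    rw [hQ]
    push_cast
    linarith

lemma QB {s : ℝ} (hs : 0 < s) (m : ℕ) : ∀ k, m ≤ k →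
    (s+1) * Q s m k ≤ ((k:ℝ)+1)^(s+1) - ((m:ℝ)+1)^(s+1) := by
  intro k hk
  induction k, hk using Nat.le_induction with
  | base => simp [Q]
  | succ k hk ih =>
    have hQ : Q s m (k+1) = Q s m k + ((k:ℝ)+1)^s := by
      rw [Q, Q, Finset.sum_Icc_succ_top (by omega)]
      push_cast; ring
    have := step_lb hs k
    rw [hQ]
    push_cast
    rw [show ((k:ℝ)+1+1) = (k:ℝ)+2 from by ring]
    linarith

lemma natpow_bound' {x : ℝ} (N : ℕ) (hx0 : 0 ≤ x) (hx1 : x ≤ 1) :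
    (1+x)^N ≤ 1 + ((2:ℝ)^N - 1)*x := by
  induction N with
  | zero => simp
  | succ N ih =>
    have h2 : (1:ℝ) ≤ 2^N := one_le_pow₀ (by norm_num)
    calc (1+x)^(N+1) = (1+x)^N * (1+x) := pow_succ _ _
      _ ≤ (1 + ((2:ℝ)^N - 1)*x) * (1+x) := by
          apply mul_le_mul_of_nonneg_right ih (by linarith)
      _ ≤ 1 + ((2:ℝ)^(N+1) - 1)*x := by
          have : ((2:ℝ)^N - 1)*x*x ≤ ((2:ℝ)^N - 1)*x := by
            apply mul_le_of_le_one_right (mul_nonneg (by linarith) hx0) hx1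
          ring_nf
          nlinarith [pow_nonneg (by norm_num : (0:ℝ) ≤ 2) N]

lemma rpow_le_natpow' {x : ℝ} (hx : 1 ≤ x) {a : ℝ} {N : ℕ} (h : a ≤ N) :
    x ^ a ≤ x ^ N := by
  rw [← Real.rpow_natCast x N]
  exact Real.rpow_le_rpow_of_exponent_le hx h


lemma key_ub {s : ℝ} (hs : 0 < s) {y : ℝ} (h0 : 0 ≤ y) (h1 : y < 1) :
    1/(1 - y^(s+1)) ≤ 1/((s+1)*(1-y)) + 2^(⌈s⌉₊+1) := by
  set N := ⌈s⌉₊ with hN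
  have hN1 : 1 ≤ N := Nat.one_le_ceil_iff.2 hs
  have hC4 : (4:ℝ) ≤ 2^(N+1) := by
    calc (4:ℝ) = 2^2 := by norm_num
    _ ≤ 2^(N+1) := pow_le_pow_right₀ (by norm_num) (by omega)
  have hya : y^(s+1) ≤ y := by
    rcases eq_or_lt_of_le h0 with h | h
    · rw [← h, Real.zero_rpow (by linarith)]
    · calc y^(s+1) ≤ y^(1:ℝ) :=
        Real.rpow_le_rpow_of_exponent_ge h h1.le (by linarith)
      _ = y := Real.rpow_one y
  have hpos : 0 < 1 - y^(s+1) := by linarith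
  have hrpos : (0:ℝ) ≤ 1/((s+1)*(1-y)) :=
    le_of_lt (div_pos one_pos (mul_pos (by linarith) (by linarith)))
  rcases le_or_gt y (1/2) with hy | hy
  · have hl : 1/(1 - y^(s+1)) ≤ 1/(1-y) := by
      apply one_div_le_one_div_of_le (by linarith) (by linarith)
    have : 1/(1-y) ≤ 2 := by
      rw [div_le_iff₀ (by linarith)]; linarith
    linarith
  · have h0' : 0 < y := by linarith
    have htanpos : 0 < (s+1) * y^s * (1-y) :=
      mul_pos (mul_pos (by linarith) (Real.rpow_pos_of_pos h0' s)) (by linarith)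
    have h2 : 1/(1 - y^(s+1)) ≤ 1/((s+1)*y^s*(1-y)) :=
      one_div_le_one_div_of_le htanpos (tangent hs h0' h1.le)
    set c : ℝ := ((2:ℝ)^N - 1)*2 with hc
    have hc0 : 0 ≤ c := by
      have : (1:ℝ) ≤ 2^N := one_le_pow₀ (by norm_num)
      rw [hc]; linarith
    have hinv : (1:ℝ)/y ≤ 1 + 2*(1-y) := by
      rw [div_le_iff₀ h0']; nlinarith
    have hys : (1/y)^s ≤ 1 + c*(1-y) := by
      calc (1/y)^s ≤ (1 + 2*(1-y))^s :=
            Real.rpow_le_rpow (by positivity) hinv hs.le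
        _ ≤ (1 + 2*(1-y))^N := rpow_le_natpow' (by linarith) (Nat.le_ceil s)
        _ ≤ 1 + ((2:ℝ)^N - 1)*(2*(1-y)) := natpow_bound' N (by linarith) (by linarith)
        _ = 1 + c*(1-y) := by rw [hc]; ring
    have hysne : y^s ≠ 0 := ne_of_gt (Real.rpow_pos_of_pos h0' s)
    have hE1 : 1/((s+1)*y^s*(1-y)) = (1/y)^s * (1/((s+1)*(1-y))) := by
      rw [Real.div_rpow zero_le_one h0'.le, Real.one_rpow, one_div_mul_one_div]
      ring_nf
    have h3 : 1/(1 - y^(s+1)) ≤ (1 + c*(1-y)) * (1/((s+1)*(1-y))) := by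
      rw [hE1] at h2
      exact h2.trans (mul_le_mul_of_nonneg_right hys hrpos)
    have hE2 : (1 + c*(1-y)) * (1/((s+1)*(1-y))) = 1/((s+1)*(1-y)) + c/(s+1) := by
      have hy1 : (1-y) ≠ 0 := ne_of_gt (by linarith : (0:ℝ) < 1-y)
      have e : (c*(1-y)) * (1/((s+1)*(1-y))) = c/(s+1) := by
        rw [mul_one_div, mul_comm (s+1) (1-y), ← div_div,
          mul_div_cancel_right₀ c hy1]
      rw [add_mul, one_mul, e]
    have hcs : c/(s+1) ≤ 2^(N+1) := by
      have h4 : c/(s+1) ≤ c := div_le_self hc0 (by linarith)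
      have : c ≤ 2^(N+1) := by rw [hc, pow_succ]; linarith
      linarith
    rw [hE2] at h3
    linarith

end PLTaux

set_option maxHeartbeats 1000000 in
/-- For power-law weights `w_i = (n−i+1)^s/f(n,s)`, the quantity
`E[T] = ∑_{r=2}^n f(n,s)/((n−r+1)^s + ⋯ + n^s)` satisfies
`E[T] = n ln n/(s+1) + O(n)`. -/
theorem power_law_expected_T (s : ℝ) (hs : 0 < s) :
    ∃ C : ℝ, 0 < C ∧ ∀ n : ℕ, 2 ≤ n →
      |(∑ r ∈ Finset.Icc 2 n,
          (∑ j ∈ Finset.Icc 1 n, (j : ℝ) ^ s) /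
            (∑ j ∈ Finset.Icc (n - r + 1) n, (j : ℝ) ^ s))
          - n * Real.log n / (s + 1)| ≤ C * n := by
  have ha0 : (0:ℝ) < s + 1 := by linarith
  have ha1 : (1:ℝ) ≤ s + 1 := by linarith
  set N := ⌈s⌉₊ with hNdef
  have hN1 : 1 ≤ N := Nat.one_le_ceil_iff.2 hs
  set c0 : ℝ := 2^(N+1) with hc0def
  have hc01 : (1:ℝ) ≤ c0 := one_le_pow₀ (by norm_num)
  refine ⟨2 + 3*c0 + c0^2, by positivity, ?_⟩
  intro n hn
  have hn0 : (0:ℝ) < n := by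
    have : 0 < n := by omega
    exact_mod_cast this
  have hn1R : (2:ℝ) ≤ n := by exact_mod_cast hn
  set L := Real.log n with hLdef
  have hL0 : 0 ≤ L := Real.log_nonneg (by linarith)
  have hLn : L ≤ (n:ℝ) := by
    have := Real.log_le_sub_one_of_pos hn0
    linarith
  set H := ∑ r ∈ Icc 2 n, (1/(r:ℝ)) with hHdef
  have hH0 : 0 ≤ H := Finset.sum_nonneg (fun r _ => by positivity)
  have hHL : H ≤ L := Hsum_le_log n (by omega)
  have hLH : L - 1 ≤ H := log_le_Hsum n (by omega)
  set f := ∑ j ∈ Icc 1 n, (j:ℝ)^s with hfdef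
  have hfQ : f = Q s 0 n := by rw [hfdef, Q]
  have hf0 : 0 ≤ f := Finset.sum_nonneg (fun j _ => Real.rpow_nonneg (Nat.cast_nonneg j) s)
  clear_value N c0 L H f
  have hnp : (0:ℝ) < (n:ℝ)^(s+1) := Real.rpow_pos_of_pos hn0 _
  have hn1p : (0:ℝ) < ((n:ℝ)+1)^(s+1) := Real.rpow_pos_of_pos (by linarith) _
  have hnsp : (0:ℝ) < ((n:ℝ)+1)^s := Real.rpow_pos_of_pos (by linarith) _
  have haf : (s+1) * f ≤ ((n:ℝ)+1)^(s+1) := by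
    have h := QB hs 0 n (Nat.zero_le n)
    rw [show (((0:ℕ):ℝ)+1) = 1 by norm_num, Real.one_rpow, ← hfQ] at h
    linarith
  have hflb : (n:ℝ)^(s+1)/(s+1) ≤ f := by
    have h := QA hs 0 n (Nat.zero_le n)
    rw [show ((0:ℕ):ℝ) = 0 by norm_num, Real.zero_rpow (ne_of_gt ha0), ← hfQ] at h
    rw [div_le_iff₀ ha0]
    linarith
  have hsplitn : (n:ℝ)^(s+1) = (n:ℝ)^s * n := by
    rw [Real.rpow_add hn0, Real.rpow_one]
  have hsplitn1 : ((n:ℝ)+1)^(s+1) = ((n:ℝ)+1)^s * ((n:ℝ)+1) := by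
    rw [Real.rpow_add (by linarith), Real.rpow_one]
  have hna : (0:ℝ) ≤ (n:ℝ)/(s+1) := by positivity
  -- ===== per-term upper bound =====
  have per_ub : ∀ r ∈ Icc 2 n,
      f / (∑ j ∈ Icc (n - r + 1) n, (j:ℝ)^s) ≤
        (1 + c0/n) * ((n:ℝ)/((s+1)*r) + c0) := by
    intro r hr
    obtain ⟨hr2, hrn⟩ := Finset.mem_Icc.1 hr
    set m := n - r with hmdef
    have hmlt : m < n := by omega
    have hm0 : (0:ℝ) ≤ (m:ℝ) := Nat.cast_nonneg m
    have hmnR : (m:ℝ) < n := by exact_mod_cast hmlt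
    have hcast : (m:ℝ) = (n:ℝ) - (r:ℝ) := by
      rw [hmdef, Nat.cast_sub hrn]
    have hr0 : (0:ℝ) < r := by
      have : 0 < r := by omega
      exact_mod_cast this
    have hSQ : (∑ j ∈ Icc (m + 1) n, (j:ℝ)^s) = Q s m n := by rw [Q]
    rw [hSQ]
    have hQA := QA hs m n hmlt.le
    have hDpos : (0:ℝ) < (n:ℝ)^(s+1) - (m:ℝ)^(s+1) := by
      have := Real.rpow_lt_rpow hm0 hmnR ha0
      linarith
    have hSpos : 0 < Q s m n := by nlinarith [hQA, hDpos]
    have t1 : f / Q s m n ≤ ((n:ℝ)+1)^(s+1) / ((n:ℝ)^(s+1) - (m:ℝ)^(s+1)) := by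
      rw [div_le_div_iff₀ hSpos hDpos]
      nlinarith [mul_le_mul_of_nonneg_left hQA hf0,
        mul_le_mul_of_nonneg_right haf hSpos.le]
    have hbase : ((n:ℝ)+1)^(s+1) = (1+1/(n:ℝ))^(s+1) * (n:ℝ)^(s+1) := by
      rw [show (1+1/(n:ℝ)) = ((n:ℝ)+1)/n by field_simp,
        Real.div_rpow (by linarith) hn0.le, div_mul_cancel₀ _ (ne_of_gt hnp)]
    have hfac : (1+1/(n:ℝ))^(s+1) ≤ 1 + c0/n := by
      have e1 : (1+1/(n:ℝ))^(s+1) ≤ (1+1/(n:ℝ))^(N+1) := by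
        apply rpow_le_natpow'
          (by nlinarith [one_div_pos.2 hn0])
        have := Nat.le_ceil s
        push_cast
        rw [← hNdef] at this
        linarith
      have e2 := natpow_bound' (x := 1/(n:ℝ)) (N+1) (by positivity)
        (by rw [div_le_one hn0]; linarith)
      have e3 : ((2:ℝ)^(N+1) - 1)*(1/(n:ℝ)) ≤ c0/n := by
        rw [div_eq_mul_one_div c0 (n:ℝ)]
        apply mul_le_mul_of_nonneg_right (by rw [hc0def]; linarith) (by positivity)
      linarith
    have hyub : ((m:ℝ)/n)^(s+1) = (m:ℝ)^(s+1)/(n:ℝ)^(s+1) :=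
      Real.div_rpow hm0 hn0.le (s+1)
    have e4 : 1 - ((m:ℝ)/n)^(s+1) = ((n:ℝ)^(s+1) - (m:ℝ)^(s+1))/(n:ℝ)^(s+1) := by
      rw [hyub, sub_div, div_self (ne_of_gt hnp)]
    have hfrac : (n:ℝ)^(s+1)/((n:ℝ)^(s+1) - (m:ℝ)^(s+1)) ≤ (n:ℝ)/((s+1)*r) + c0 := by
      have hk := key_ub hs (y := (m:ℝ)/n) (by positivity) ((div_lt_one hn0).2 hmnR)
      rw [e4, one_div_div] at hk
      have e5 : 1 - (m:ℝ)/n = (r:ℝ)/n := by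
        rw [hcast]
        field_simp
        ring
      rw [e5] at hk
      have e6 : 1/((s+1)*((r:ℝ)/n)) = (n:ℝ)/((s+1)*r) := by
        rw [← mul_div_assoc, one_div_div]
      rw [e6] at hk
      rw [← hNdef, ← hc0def] at hk
      exact hk
    calc f / Q s m n ≤ ((n:ℝ)+1)^(s+1) / ((n:ℝ)^(s+1) - (m:ℝ)^(s+1)) := t1
      _ = (1+1/(n:ℝ))^(s+1) * ((n:ℝ)^(s+1)/((n:ℝ)^(s+1) - (m:ℝ)^(s+1))) := by
          rw [hbase, mul_div_assoc]
      _ ≤ (1 + c0/n) * ((n:ℝ)/((s+1)*r) + c0) := by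
          apply mul_le_mul hfac hfrac (le_of_lt (div_pos hnp hDpos)) (by positivity)
  -- ===== per-term lower bound =====
  have per_lb : ∀ r ∈ Icc 2 n,
      ((n:ℝ)*(1-(s+1)/((n:ℝ)+1)))/((s+1)*r) ≤
        f / (∑ j ∈ Icc (n - r + 1) n, (j:ℝ)^s) := by
    intro r hr
    obtain ⟨hr2, hrn⟩ := Finset.mem_Icc.1 hr
    set m := n - r with hmdef
    have hmlt : m < n := by omega
    have hm0 : (0:ℝ) ≤ (m:ℝ) := Nat.cast_nonneg m
    have hmnR : (m:ℝ) < n := by exact_mod_cast hmlt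
    have hcast : (m:ℝ) = (n:ℝ) - (r:ℝ) := by
      rw [hmdef, Nat.cast_sub hrn]
    have hr0 : (0:ℝ) < r := by
      have : 0 < r := by omega
      exact_mod_cast this
    have hSQ : (∑ j ∈ Icc (m + 1) n, (j:ℝ)^s) = Q s m n := by rw [Q]
    rw [hSQ]
    have hQA := QA hs m n hmlt.le
    have hQB := QB hs m n hmlt.le
    have hDpos : (0:ℝ) < (n:ℝ)^(s+1) - (m:ℝ)^(s+1) := by
      have := Real.rpow_lt_rpow hm0 hmnR ha0
      linarith
    have hSpos : 0 < Q s m n := by nlinarith [hQA, hDpos]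
    have hyb := bern_le hs (y := ((m:ℝ)+1)/((n:ℝ)+1)) (by positivity)
      (by rw [div_le_one (by linarith)]; linarith)
    have hDub : ((n:ℝ)+1)^(s+1) - ((m:ℝ)+1)^(s+1) ≤ (s+1)*(r:ℝ)*((n:ℝ)+1)^s := by
      have hmul := mul_le_mul_of_nonneg_right hyb (le_of_lt hn1p)
      have eL : (1 - (((m:ℝ)+1)/((n:ℝ)+1))^(s+1)) * ((n:ℝ)+1)^(s+1)
          = ((n:ℝ)+1)^(s+1) - ((m:ℝ)+1)^(s+1) := by
        rw [Real.div_rpow (by positivity) (by linarith)]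
        field_simp
      have eR : ((s+1)*(1 - ((m:ℝ)+1)/((n:ℝ)+1))) * ((n:ℝ)+1)^(s+1)
          = (s+1)*(r:ℝ)*((n:ℝ)+1)^s := by
        have e5 : 1 - ((m:ℝ)+1)/((n:ℝ)+1) = (r:ℝ)/((n:ℝ)+1) := by
          rw [hcast]
          field_simp
          ring
        rw [e5, hsplitn1]
        field_simp
      rw [eL, eR] at hmul
      exact hmul
    have hQub : Q s m n ≤ (r:ℝ)*((n:ℝ)+1)^s := by
      have h1 : (s+1)*Q s m n ≤ (s+1)*((r:ℝ)*((n:ℝ)+1)^s) := by nlinarith [hQB, hDub]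
      exact le_of_mul_le_mul_left h1 ha0
    have step1 : ((n:ℝ)^(s+1)/(s+1)) / ((r:ℝ)*((n:ℝ)+1)^s) ≤ f / Q s m n :=
      div_le_div₀ hf0 hflb hSpos hQub
    have hX : (n:ℝ)*(1-(s+1)/((n:ℝ)+1)) ≤ (n:ℝ)^(s+1)/((n:ℝ)+1)^s := by
      have hb2 := bern (a := s+1) (z := -(1/((n:ℝ)+1))) ha1
        (by
          have h1 : (0:ℝ) < 1/((n:ℝ)+1) := by positivity
          have h2 : 1/((n:ℝ)+1) ≤ 1 := by rw [div_le_one (by linarith)]; linarith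
          linarith)
      have eb : (1 + -(1/((n:ℝ)+1))) = (n:ℝ)/((n:ℝ)+1) := by field_simp; ring
      rw [eb] at hb2
      have hmono : ((n:ℝ)/((n:ℝ)+1))^(s+1) ≤ ((n:ℝ)/((n:ℝ)+1))^s :=
        Real.rpow_le_rpow_of_exponent_ge (by positivity)
          (by rw [div_le_one (by linarith)]; linarith) (by linarith)
      have ediv : ((n:ℝ)/((n:ℝ)+1))^s = (n:ℝ)^s/((n:ℝ)+1)^s :=
        Real.div_rpow hn0.le (by linarith) s
      have efin : (n:ℝ)^(s+1)/((n:ℝ)+1)^s = (n:ℝ)*((n:ℝ)^s/((n:ℝ)+1)^s) := by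
        rw [hsplitn]; ring
      rw [efin, ← ediv]
      have hfin : 1 - (s+1)/((n:ℝ)+1) ≤ ((n:ℝ)/((n:ℝ)+1))^s := by
        have h1' : 1 + (s+1)*(-(1/((n:ℝ)+1))) = 1 - (s+1)/((n:ℝ)+1) := by ring
        linarith [hb2, hmono]
      exact mul_le_mul_of_nonneg_left hfin hn0.le
    have step2 : ((n:ℝ)*(1-(s+1)/((n:ℝ)+1)))/((s+1)*r)
        ≤ ((n:ℝ)^(s+1)/(s+1)) / ((r:ℝ)*((n:ℝ)+1)^s) := by
      have e8 : ((n:ℝ)^(s+1)/(s+1)) / ((r:ℝ)*((n:ℝ)+1)^s)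
          = ((n:ℝ)^(s+1)/((n:ℝ)+1)^s)/((s+1)*r) := by
        rw [div_div, div_div]
        ring_nf
      rw [e8]
      exact (div_le_div_iff_of_pos_right (mul_pos ha0 hr0)).2 hX
    exact step2.trans step1
  -- ===== sum to closed forms =====
  have hcard : ((n + 1 - 2 : ℕ):ℝ) = (n:ℝ) - 1 := by
    have h : n + 1 - 2 = n - 1 := by omega
    rw [h, Nat.cast_sub (by omega)]
    norm_num
  have hEub : (∑ r ∈ Icc 2 n, f / (∑ j ∈ Icc (n - r + 1) n, (j:ℝ)^s))
      ≤ (1 + c0/n) * (((n:ℝ)/(s+1)) * H + c0*((n:ℝ)-1)) := by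
    calc (∑ r ∈ Icc 2 n, f / (∑ j ∈ Icc (n - r + 1) n, (j:ℝ)^s))
        ≤ ∑ r ∈ Icc 2 n, (1 + c0/n) * ((n:ℝ)/((s+1)*r) + c0) :=
          Finset.sum_le_sum per_ub
      _ = (1 + c0/n) * (∑ r ∈ Icc 2 n, ((n:ℝ)/((s+1)*r) + c0)) := by
          rw [Finset.mul_sum]
      _ = (1 + c0/n) * (((n:ℝ)/(s+1)) * H + c0*((n:ℝ)-1)) := by
          congr 1
          rw [Finset.sum_add_distrib, Finset.sum_const, Nat.card_Icc]
          have e7 : ∑ r ∈ Icc 2 n, (n:ℝ)/((s+1)*r) = ((n:ℝ)/(s+1)) * H := by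
            rw [hHdef, Finset.mul_sum]
            apply Finset.sum_congr rfl
            intro r _
            rw [div_mul_div_comm, mul_one]
          rw [e7, nsmul_eq_mul, hcard]
          ring
  have hElb : (((n:ℝ)*(1-(s+1)/((n:ℝ)+1)))/(s+1))*H
      ≤ (∑ r ∈ Icc 2 n, f / (∑ j ∈ Icc (n - r + 1) n, (j:ℝ)^s)) := by
    calc (((n:ℝ)*(1-(s+1)/((n:ℝ)+1)))/(s+1))*H
        = ∑ r ∈ Icc 2 n, ((n:ℝ)*(1-(s+1)/((n:ℝ)+1)))/((s+1)*r) := by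
          rw [hHdef, Finset.mul_sum]
          apply Finset.sum_congr rfl
          intro r _
          rw [div_mul_div_comm, mul_one]
      _ ≤ _ := Finset.sum_le_sum per_lb
  -- ===== final arithmetic =====
  have hc0n : (0:ℝ) ≤ c0*n := by positivity
  have hc0sqn : (0:ℝ) ≤ c0^2*n := by positivity
  have A1 : ((n:ℝ)/(s+1))*H ≤ (n:ℝ)*L/(s+1) := by
    have h := mul_le_mul_of_nonneg_left hHL hna
    calc ((n:ℝ)/(s+1))*H ≤ ((n:ℝ)/(s+1))*L := h
      _ = (n:ℝ)*L/(s+1) := by ring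
  have A2 : (c0/n)*(((n:ℝ)/(s+1))*H) ≤ c0*n := by
    have e : (c0/n)*(((n:ℝ)/(s+1))*H) = c0*H/(s+1) := by
      field_simp
    rw [e]
    have h1 : c0*H/(s+1) ≤ c0*H := div_le_self (by positivity) ha1
    have h2 : c0*H ≤ c0*(n:ℝ) :=
      mul_le_mul_of_nonneg_left (hHL.trans hLn) (by linarith)
    linarith
  have A3 : (c0/n)*(c0*((n:ℝ)-1)) ≤ c0^2*n := by
    have e : (c0/n)*(c0*((n:ℝ)-1)) = c0^2*(((n:ℝ)-1)/n) := by ring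
    rw [e]
    have h1 : ((n:ℝ)-1)/n ≤ 1 := by rw [div_le_one hn0]; linarith
    nlinarith
  have A4 : c0*((n:ℝ)-1) ≤ c0*n := by nlinarith
  have hexp : (1 + c0/n) * (((n:ℝ)/(s+1)) * H + c0*((n:ℝ)-1))
      = ((n:ℝ)/(s+1))*H + c0*((n:ℝ)-1) + (c0/n)*(((n:ℝ)/(s+1))*H)
        + (c0/n)*(c0*((n:ℝ)-1)) := by ring
  have hXa : (n:ℝ) - (s+1) ≤ (n:ℝ)*(1-(s+1)/((n:ℝ)+1)) := by
    have h2 : (n:ℝ)*((s+1)/((n:ℝ)+1)) ≤ (s+1) := by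
      rw [← mul_div_assoc, div_le_iff₀ (by linarith : (0:ℝ) < (n:ℝ)+1)]
      nlinarith
    have e : (n:ℝ)*(1-(s+1)/((n:ℝ)+1)) = (n:ℝ) - (n:ℝ)*((s+1)/((n:ℝ)+1)) := by ring
    rw [e]
    linarith
  have C1 : (((n:ℝ)-(s+1))/(s+1))*H ≤ (((n:ℝ)*(1-(s+1)/((n:ℝ)+1)))/(s+1))*H :=
    mul_le_mul_of_nonneg_right ((div_le_div_iff_of_pos_right ha0).2 hXa) hH0
  have C2 : (((n:ℝ)-(s+1))/(s+1))*H = ((n:ℝ)/(s+1))*H - H := by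
    field_simp
  have C3 : ((n:ℝ)/(s+1))*(L-1) ≤ ((n:ℝ)/(s+1))*H := mul_le_mul_of_nonneg_left hLH hna
  have C4 : ((n:ℝ)/(s+1))*(L-1) = (n:ℝ)*L/(s+1) - (n:ℝ)/(s+1) := by ring
  have C5 : (n:ℝ)/(s+1) ≤ (n:ℝ) := div_le_self hn0.le ha1
  rw [abs_le]
  constructor
  · linarith [hElb, C1, C2, C3, C4, C5, hHL, hLn, hc0n, hc0sqn]
  · linarith [hEub, hexp, A1, A2, A3, A4, hc0n, hn0]
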